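/- Or-to-If holds in certainty-preserving (non-falsity-preserving) inference but fails in uncertain inference: (i) for all a, b ∈ {0,1/2,1}, if f∨'(f¬(a), b) ≥ 1/2 then f→(a,b) ≥ 1/2; but (ii) there exist a, b ∈ {0,1/2,1} (indeed bivalent a,b can be chosen together with a probability distribution over two worlds) such that the pointwise inequality f∨'(f¬(a), b) ≤ f→(a,b) fails, i.e., there exist a,b with f∨'(f¬(a),b) = 1 and f→(a,b) = 1/2. -/
import Mathlib


/-- The set of trivalent truth values {0, 1/2, 1} inside ℚ. -/
def Tri (x : ℚ) : Prop := x = 0 ∨ x = 1/2 ∨ x = 1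

/-- Cooper conditional: f→(0,y)=1/2, f→(1,y)=y, f→(1/2,y)=y (on trivalent values). -/
def tcond (a b : ℚ) : ℚ := if a = 0 then 1/2 else b

/-- Quasi-conjunction. -/
def tand (a b : ℚ) : ℚ :=
  if a = 0 ∨ b = 0 then 0 else if a = 1 ∨ b = 1 then 1 else 1/2

/-- Quasi-disjunction. -/
def tor (a b : ℚ) : ℚ :=
  if a = 1 ∨ b = 1 then 1 else if a = 0 ∨ b = 0 then 0 else 1/2

/-- Strong Kleene negation. -/
def tneg (a : ℚ) : ℚ := 1 - a

/-- Or-to-If holds in certainty-preserving inference (designated value preservation)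
but fails pointwise in uncertain inference. -/
theorem or_to_if :
    (∀ a b : ℚ, Tri a → Tri b → 1/2 ≤ tor (tneg a) b → 1/2 ≤ tcond a b) ∧
    (∃ a b : ℚ, Tri a ∧ Tri b ∧ tor (tneg a) b = 1 ∧ tcond a b = 1/2) := by
  constructor
  · rintro a b (rfl|rfl|rfl) (rfl|rfl|rfl) h <;>
      simp_all [tor, tneg, tcond] <;> norm_num
  · exact ⟨0, 1, Or.inl rfl, Or.inr (Or.inr rfl), by norm_num [tor, tneg], by norm_num [tcond]⟩
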